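/- Suppose there exists an injective map f : O → M with adj o (f o) for every o ∈ O (each non-metered bus is matched to one unique metered bus along a feeder line). Then the single-slot phasor pattern has full generic column rank; that is, there exists a real matrix supported on this pattern whose rank equals 2·(|M| + |O|). -/

import Mathlib

/-- A matrix `A` is supported on the sparsity pattern `S` if every nonzero
entry `A r c` satisfies `S r c`. -/
def SupportedOn {R C : Type*} (S : R → C → Prop) (A : Matrix R C ℝ) : Prop :=
  ∀ r c, A r c ≠ 0 → S r c

/-- Sparsity pattern of the bus conductance matrix: nonzero diagonal, and
the `(n,m)` off-diagonal entry is nonzero exactly for distribution lines. -/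
def adjDiag {V : Type*} (adj : V → V → Prop) (n m : V) : Prop :=
  n = m ∨ adj n m

/-- The single-slot phasor sparsity pattern.
Rows: metering equations `(τ, n)` with `τ ∈ {u, θ, p, q}` (coded as `Fin 4`,
with `τ < 2` meaning `u` or `θ`) at probed buses `n ∈ M`.
Columns: `(i, m)` for the real/imaginary parts (`i : Fin 2`) of the voltage
of bus `m`. -/
def SingleSlotPhasorPattern {M O : Type*} (adj : (M ⊕ O) → (M ⊕ O) → Prop)
    (r : Fin 4 × M) (c : Fin 2 × (M ⊕ O)) : Prop :=
  if (r.1 : ℕ) < 2 then c.2 = Sum.inl r.2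
  else adjDiag adj (Sum.inl r.2) c.2

/-- Theorem 3: if each non-metered bus can be matched to one unique metered
bus along a feeder line, then the single-slot phasor pattern has full generic
column rank `2·(|M| + |O|)`. -/
theorem single_slot_phasor_generic_full_rank
    {M O : Type*} [Fintype M] [Fintype O]
    (adj : (M ⊕ O) → (M ⊕ O) → Prop)
    (hsymm : ∀ n m, adj n m → adj m n)
    (hirr : ∀ n, ¬ adj n n)
    (f : O → M) (hf : Function.Injective f)
    (hadj : ∀ o, adj (Sum.inr o) (Sum.inl (f o))) :
    ∃ A : Matrix (Fin 4 × M) (Fin 2 × (M ⊕ O)) ℝ,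
      SupportedOn (SingleSlotPhasorPattern adj) A ∧
      A.rank = 2 * (Fintype.card M + Fintype.card O) := by
  classical
  -- row assigned to each column
  set g : Fin 2 × (M ⊕ O) → Fin 4 × M := fun c =>
    match c with
    | (i, Sum.inl n) => (⟨(i : ℕ), by omega⟩, n)
    | (i, Sum.inr o) => (⟨(i : ℕ) + 2, by omega⟩, f o) with hg
  -- the matrix: 1 at (g c, c), 0 elsewhere
  set A : Matrix (Fin 4 × M) (Fin 2 × (M ⊕ O)) ℝ := fun r c =>
    if g c = r then 1 else 0 with hA
  have hginj : Function.Injective g := by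
    rintro ⟨i, m⟩ ⟨j, m'⟩ h
    have hi := i.isLt; have hj := j.isLt
    rcases m with n | o <;> rcases m' with n' | o' <;>
      simp only [hg, Prod.mk.injEq, Fin.mk.injEq] at h
    · exact Prod.ext (Fin.ext h.1) (congrArg Sum.inl h.2)
    · omega
    · omega
    · exact Prod.ext (Fin.ext (by simpa using h.1)) (congrArg Sum.inr (hf h.2))
  refine ⟨A, ?_, ?_⟩
  · -- supported
    rintro ⟨τ, n⟩ ⟨i, m⟩ hne
    simp only [hA] at hne
    by_cases h : g (i, m) = (τ, n)
    · rcases m with n' | o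
      · simp only [hg] at h
        obtain ⟨h1, h2⟩ := Prod.mk.injEq .. ▸ h
        have hτ : (τ : ℕ) = (i : ℕ) := by
          have := congrArg Fin.val h1; simpa using this.symm
        subst h2
        simp [SingleSlotPhasorPattern, hτ, adjDiag]
      · simp only [hg] at h
        obtain ⟨h1, h2⟩ := Prod.mk.injEq .. ▸ h
        have hτ : (τ : ℕ) = (i : ℕ) + 2 := by
          have := congrArg Fin.val h1; simpa using this.symm
        subst h2
        simp only [SingleSlotPhasorPattern]
        rw [if_neg (by omega)]
        exact Or.inr (hsymm _ _ (hadj o))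
    · simp [h] at hne
  · -- rank
    have hle : A.rank ≤ 2 * (Fintype.card M + Fintype.card O) := by
      have := A.rank_le_card_width
      simpa [mul_add, Fintype.card_prod, Fintype.card_sum, mul_comm] using this
    have hge : 2 * (Fintype.card M + Fintype.card O) ≤ A.rank := by
      set P : Matrix (Fin 2 × (M ⊕ O)) (Fin 4 × M) ℝ := fun c r =>
        if r = g c then 1 else 0 with hP
      have hPA : P * A = 1 := by
        ext c c'
        rw [Matrix.mul_apply]; simp only [hP, hA]
        rw [Finset.sum_eq_single (g c)]
        · by_cases h : c = c'
          · subst h; simp [Matrix.one_apply]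
          · have : g c' ≠ g c := fun hx => h (hginj hx).symm
            simp [Matrix.one_apply, h, this]
        · intro r _ hr; simp [hr]
        · intro h; exact absurd (Finset.mem_univ _) h
      calc 2 * (Fintype.card M + Fintype.card O)
          = Fintype.card (Fin 2 × (M ⊕ O)) := by
            simp [Fintype.card_prod, Fintype.card_sum]
        _ = (1 : Matrix (Fin 2 × (M ⊕ O)) (Fin 2 × (M ⊕ O)) ℝ).rank :=
            Matrix.rank_one.symm
        _ = (P * A).rank := by rw [hPA]
        _ ≤ A.rank := Matrix.rank_mul_le_right P A
    omega
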